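/- arXiv:2605.05717 — 3 statements merged into one kernel-verified Lean document; each statement's English description precedes it below -/
import Mathlib

section
/- Consider the time-invariant setting F_t = F and H_t^{(k)} = H^{(k)} for all t, and let S_K := span of the columns of (F^⊤)^t H^{(ℓ)⊤} over all ℓ ∈ {1,…,K} and all t ∈ ℕ. If the range of H^{(K+1)⊤} is NOT contained in S_K, then for every horizon T ≥ 1 the kernel strictly shrinks: ker W_o^{(K+1)}(T) ⊊ ker W_o^{(K)}(T); in particular rank W_o^{(K+1)}(T) > rank W_o^{(K)}(T). -/
open Matrix Finset in
private lemma sum_mulVec' {ι a b : Type*} [Fintype b] (s : Finset ι)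
    (M : ι → Matrix a b ℝ) (x : b → ℝ) :
    (∑ i ∈ s, M i) *ᵥ x = ∑ i ∈ s, M i *ᵥ x := by
  funext j
  simp only [Matrix.mulVec, dotProduct, Finset.sum_apply, Matrix.sum_apply,
    Finset.sum_mul]
  exact Finset.sum_comm

private lemma posSemidef_sum {ι m : Type*} [Fintype m] [DecidableEq m] (s : Finset ι)
    (M : ι → Matrix m m ℝ) (h : ∀ i ∈ s, (M i).PosSemidef) :
    (∑ i ∈ s, M i).PosSemidef :=
  Finset.sum_induction M Matrix.PosSemidef (fun _ _ ha hb => ha.add hb)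
    Matrix.PosSemidef.zero h

open Matrix in
private lemma dotProduct_sum' {ι b : Type*} [Fintype b] (s : Finset ι) (y : b → ℝ)
    (w : ι → b → ℝ) : y ⬝ᵥ (∑ i ∈ s, w i) = ∑ i ∈ s, y ⬝ᵥ w i := by
  simp only [dotProduct, Finset.sum_apply, Finset.mul_sum]
  exact Finset.sum_comm

open Matrix in
private lemma quad_sandwich {p n : ℕ} (A : Matrix (Fin p) (Fin n) ℝ)
    (M : Matrix (Fin p) (Fin p) ℝ) (x : Fin n → ℝ) :
    x ⬝ᵥ ((Aᵀ * M * A) *ᵥ x) = (A *ᵥ x) ⬝ᵥ (M *ᵥ (A *ᵥ x)) := by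
  rw [← Matrix.mulVec_mulVec, ← Matrix.mulVec_mulVec, dotProduct_mulVec,
    Matrix.vecMul_transpose]

/- STATEMENT 7 (Saturation, necessity direction / strict gain).
Time-invariant setting, K+1 channels. If range(H^(K+1)ᵀ) is NOT contained in S_K,
then for every horizon T ≥ 1 the kernel strictly shrinks,
ker W^(K+1)(T) ⊊ ker W^(K)(T); in particular rank W^(K+1)(T) > rank W^(K)(T). -/
open Matrix Finset in
theorem non_redundant_channel_strict_gain
    (n K : ℕ) (pdim : Fin (K + 1) → ℕ)
    (F : Matrix (Fin n) (Fin n) ℝ)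
    (H : (k : Fin (K + 1)) → Matrix (Fin (pdim k)) (Fin n) ℝ)
    (R : (k : Fin (K + 1)) → Matrix (Fin (pdim k)) (Fin (pdim k)) ℝ)
    (hR : ∀ k, (R k).PosDef)
    (WK WK1 : ℕ → Matrix (Fin n) (Fin n) ℝ)
    (hWK : ∀ T, WK T = ∑ t ∈ Finset.range T,
      (F ^ t)ᵀ * (∑ k : Fin K, (H k.castSucc)ᵀ * (R k.castSucc)⁻¹ * H k.castSucc) * F ^ t)
    (hWK1 : ∀ T, WK1 T = ∑ t ∈ Finset.range T,
      (F ^ t)ᵀ * (∑ k : Fin (K + 1), (H k)ᵀ * (R k)⁻¹ * H k) * F ^ t)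
    (SK : Submodule ℝ (Fin n → ℝ))
    (hSK : SK = Submodule.span ℝ
      {x : Fin n → ℝ | ∃ (ℓ : Fin K) (t : ℕ) (c : Fin (pdim ℓ.castSucc)),
        x = fun r => ((Fᵀ) ^ t * (H ℓ.castSucc)ᵀ) r c})
    (hRange : ¬ LinearMap.range ((H (Fin.last K))ᵀ).mulVecLin ≤ SK) :
    ∀ T, 1 ≤ T →
      LinearMap.ker (WK1 T).mulVecLin < LinearMap.ker (WK T).mulVecLin ∧
      (WK T).rank < (WK1 T).rank := by
  classical
  -- extract a vector in the range of H_{K+1}ᵀ not in S_K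
  obtain ⟨v, hvr, hv⟩ : ∃ v, v ∈ LinearMap.range ((H (Fin.last K))ᵀ).mulVecLin ∧ v ∉ SK := by
    by_contra h
    push_neg at h
    exact hRange h
  obtain ⟨u, hu⟩ := hvr
  -- dual functional vanishing on SK but not on v
  obtain ⟨f, hf1, hf2⟩ := SK.exists_dual_map_eq_bot_of_notMem hv inferInstance
  set x : Fin n → ℝ := fun i => f (Pi.single i 1) with hxdef
  have hfx : ∀ y : Fin n → ℝ, f y = y ⬝ᵥ x := by
    intro y
    have hsingle : ∀ i : Fin n, f (fun j => if i = j then (1:ℝ) else 0) = x i := by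
      intro i
      rw [hxdef]
      congr 1
      funext j
      simp [Pi.single_apply, eq_comm]
    conv_lhs => rw [pi_eq_sum_univ y]
    rw [map_sum]
    simp [dotProduct, hsingle, mul_comm]
  have hort : ∀ s ∈ SK, s ⬝ᵥ x = 0 := by
    intro s hs
    rw [← hfx]
    have : f s ∈ SK.map f := Submodule.mem_map_of_mem hs
    rwa [hf2, Submodule.mem_bot] at this
  -- x is orthogonal to all H_ℓ F^t directions
  have hHFt : ∀ (ℓ : Fin K) (t : ℕ), H ℓ.castSucc *ᵥ (F ^ t *ᵥ x) = 0 := by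
    intro ℓ t
    funext c
    have hmem : (fun r => ((Fᵀ) ^ t * (H ℓ.castSucc)ᵀ) r c) ∈ SK := by
      rw [hSK]
      exact Submodule.subset_span ⟨ℓ, t, c, rfl⟩
    have h0 := hort _ hmem
    have hT : (Fᵀ) ^ t * (H ℓ.castSucc)ᵀ = (H ℓ.castSucc * F ^ t)ᵀ := by
      rw [Matrix.transpose_mul, Matrix.transpose_pow]
    rw [Matrix.mulVec_mulVec]
    simpa [dotProduct, Matrix.mulVec, hT, Matrix.transpose_apply, mul_comm] using h0
  -- hence x is in the kernel of every WK T
  have hxK : ∀ T, WK T *ᵥ x = 0 := by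
    intro T
    rw [hWK]
    rw [sum_mulVec' _ _ _]
    refine Finset.sum_eq_zero fun t _ => ?_
    rw [← Matrix.mulVec_mulVec, ← Matrix.mulVec_mulVec, sum_mulVec' _ _ _]
    have : ∀ k ∈ Finset.univ, ((H (Fin.castSucc k))ᵀ * (R (Fin.castSucc k))⁻¹ *
        H (Fin.castSucc k)) *ᵥ (F ^ t *ᵥ x) = 0 := by
      intro k _
      rw [← Matrix.mulVec_mulVec, ← Matrix.mulVec_mulVec, hHFt k t, Matrix.mulVec_zero,
        Matrix.mulVec_zero]
    rw [Finset.sum_eq_zero this, Matrix.mulVec_zero]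
  -- quadratic-form expansions
  have hquadK : ∀ (T : ℕ) (y : Fin n → ℝ), y ⬝ᵥ (WK T *ᵥ y) =
      ∑ t ∈ Finset.range T, ∑ k : Fin K,
        (H k.castSucc *ᵥ (F ^ t *ᵥ y)) ⬝ᵥ ((R k.castSucc)⁻¹ *ᵥ (H k.castSucc *ᵥ (F ^ t *ᵥ y))) := by
    intro T y
    rw [hWK, sum_mulVec' _ _ _, dotProduct_sum' _ _ _]
    refine Finset.sum_congr rfl fun t _ => ?_
    rw [quad_sandwich (F ^ t) _ y, sum_mulVec' _ _ _, dotProduct_sum' _ _ _]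
    exact Finset.sum_congr rfl fun k _ => quad_sandwich (H k.castSucc) _ _
  have hquadK1 : ∀ (T : ℕ) (y : Fin n → ℝ), y ⬝ᵥ (WK1 T *ᵥ y) =
      ∑ t ∈ Finset.range T, ∑ k : Fin (K + 1),
        (H k *ᵥ (F ^ t *ᵥ y)) ⬝ᵥ ((R k)⁻¹ *ᵥ (H k *ᵥ (F ^ t *ᵥ y))) := by
    intro T y
    rw [hWK1, sum_mulVec' _ _ _, dotProduct_sum' _ _ _]
    refine Finset.sum_congr rfl fun t _ => ?_
    rw [quad_sandwich (F ^ t) _ y, sum_mulVec' _ _ _, dotProduct_sum' _ _ _]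
    exact Finset.sum_congr rfl fun k _ => quad_sandwich (H k) _ _
  have hRinv : ∀ k, ((R k)⁻¹).PosDef := fun k => (hR k).inv
  have hterm_nonneg : ∀ (k : Fin (K + 1)) (z : Fin (pdim k) → ℝ),
      0 ≤ z ⬝ᵥ ((R k)⁻¹ *ᵥ z) := by
    intro k z
    have := (hRinv k).posSemidef.dotProduct_mulVec_nonneg z
    simpa using this
  -- H_{K+1} x ≠ 0
  have hHx : H (Fin.last K) *ᵥ x ≠ 0 := by
    intro h0
    apply hf1
    rw [hfx, ← hu]
    have : ((H (Fin.last K))ᵀ).mulVecLin u ⬝ᵥ x = x ⬝ᵥ ((H (Fin.last K))ᵀ *ᵥ u) := by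
      rw [Matrix.mulVecLin_apply, dotProduct_comm]
    rw [this, dotProduct_mulVec, Matrix.vecMul_transpose, h0, zero_dotProduct]
  intro T hT
  -- x is not in the kernel of WK1 T
  have hxpos : 0 < x ⬝ᵥ (WK1 T *ᵥ x) := by
    rw [hquadK1]
    refine Finset.sum_pos' (fun t _ => Finset.sum_nonneg fun k _ => hterm_nonneg k _) ?_
    refine ⟨0, Finset.mem_range.2 hT, ?_⟩
    refine Finset.sum_pos' (fun k _ => hterm_nonneg k _) ⟨Fin.last K, Finset.mem_univ _, ?_⟩
    have hz : H (Fin.last K) *ᵥ (F ^ 0 *ᵥ x) = H (Fin.last K) *ᵥ x := by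
      rw [pow_zero, Matrix.one_mulVec]
    rw [hz]
    have := (hRinv (Fin.last K)).dotProduct_mulVec_pos hHx
    simpa using this
  have hxnot : WK1 T *ᵥ x ≠ 0 := by
    intro h0
    rw [h0, dotProduct_zero] at hxpos
    exact lt_irrefl 0 hxpos
  -- WK T is PSD
  have hWKpsd : (WK T).PosSemidef := by
    rw [hWK]
    refine posSemidef_sum _ _ fun t _ => ?_
    have hsum : (∑ k : Fin K, (H k.castSucc)ᵀ * (R k.castSucc)⁻¹ * H k.castSucc).PosSemidef := by
      refine posSemidef_sum _ _ fun k _ => ?_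
      have h1 : ((R k.castSucc)⁻¹).PosSemidef := (hRinv k.castSucc).posSemidef
      have := h1.conjTranspose_mul_mul_same (H k.castSucc)
      rwa [Matrix.conjTranspose_eq_transpose_of_trivial] at this
    have := hsum.conjTranspose_mul_mul_same (F ^ t)
    rwa [Matrix.conjTranspose_eq_transpose_of_trivial] at this
  -- ker inclusion
  have hker_le : LinearMap.ker (WK1 T).mulVecLin ≤ LinearMap.ker (WK T).mulVecLin := by
    intro y hy
    rw [LinearMap.mem_ker, Matrix.mulVecLin_apply] at hy ⊢
    have hq1 : y ⬝ᵥ (WK1 T *ᵥ y) = 0 := by rw [hy, dotProduct_zero]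
    have hsplit : y ⬝ᵥ (WK1 T *ᵥ y) = y ⬝ᵥ (WK T *ᵥ y) +
        ∑ t ∈ Finset.range T, (H (Fin.last K) *ᵥ (F ^ t *ᵥ y)) ⬝ᵥ
          ((R (Fin.last K))⁻¹ *ᵥ (H (Fin.last K) *ᵥ (F ^ t *ᵥ y))) := by
      rw [hquadK1, hquadK, ← Finset.sum_add_distrib]
      refine Finset.sum_congr rfl fun t _ => ?_
      rw [Fin.sum_univ_castSucc]
    have hKnonneg : 0 ≤ y ⬝ᵥ (WK T *ᵥ y) := by
      rw [hquadK]
      exact Finset.sum_nonneg fun t _ => Finset.sum_nonneg fun k _ => hterm_nonneg _ _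
    have hExtra : 0 ≤ ∑ t ∈ Finset.range T, (H (Fin.last K) *ᵥ (F ^ t *ᵥ y)) ⬝ᵥ
        ((R (Fin.last K))⁻¹ *ᵥ (H (Fin.last K) *ᵥ (F ^ t *ᵥ y))) :=
      Finset.sum_nonneg fun t _ => hterm_nonneg _ _
    rw [hsplit] at hq1
    have hq0 : y ⬝ᵥ (WK T *ᵥ y) = 0 := by linarith only [hq1, hKnonneg, hExtra]
    have := (hWKpsd.dotProduct_mulVec_zero_iff y).1 (by simpa using hq0)
    exact this
  have hlt : LinearMap.ker (WK1 T).mulVecLin < LinearMap.ker (WK T).mulVecLin := by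
    refine lt_of_le_of_ne hker_le ?_
    intro heq
    have hx1 : x ∈ LinearMap.ker (WK T).mulVecLin := by
      rw [LinearMap.mem_ker, Matrix.mulVecLin_apply]
      exact hxK T
    rw [← heq, LinearMap.mem_ker, Matrix.mulVecLin_apply] at hx1
    exact hxnot hx1
  refine ⟨hlt, ?_⟩
  have h1 := LinearMap.finrank_range_add_finrank_ker (WK T).mulVecLin
  have h2 := LinearMap.finrank_range_add_finrank_ker (WK1 T).mulVecLin
  have h3 : Module.finrank ℝ (LinearMap.ker (WK1 T).mulVecLin) <
      Module.finrank ℝ (LinearMap.ker (WK T).mulVecLin) :=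
    Submodule.finrank_lt_finrank_of_lt hlt
  have hrk : (WK T).rank = Module.finrank ℝ (LinearMap.range (WK T).mulVecLin) := rfl
  have hrk1 : (WK1 T).rank = Module.finrank ℝ (LinearMap.range (WK1 T).mulVecLin) := rfl
  rw [hrk, hrk1]
  omega
end

section
/- Let P ∈ ℝ^{n×n} be symmetric positive definite, F ∈ ℝ^{n×n} with det F = 1, Q ∈ ℝ^{n×n} symmetric positive semidefinite, and S ∈ ℝ^{n×n} symmetric positive semidefinite. Define the prior covariance P' = F P F^⊤ + Q and the posterior covariance P₊ = (P'^{-1} + S)^{-1}. Then the one-step change in uncertainty volume decomposes exactly as log det P₊ − log det P = log det(I + Q (F P F^⊤)^{-1}) − log det(I + P' S), where the first term is the temporal (process-noise) contribution and the second term is the instantaneous spatial (sensor-information) contribution. -/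
open Matrix in
private lemma fpf_posdef {n : ℕ} {P F : Matrix (Fin n) (Fin n) ℝ}
    (hP : P.PosDef) (hF : IsUnit F.det) : (F * P * Fᵀ).PosDef := by
  have hFt : Fᵀ = Fᴴ := (Matrix.conjTranspose_eq_transpose_of_trivial F).symm
  rw [hFt]
  refine Matrix.PosDef.of_dotProduct_mulVec_pos ?_ fun x hx => ?_
  · have hPt : Pᵀ = P := by
      rw [← Matrix.conjTranspose_eq_transpose_of_trivial P, hP.isHermitian.eq]
    simp [Matrix.IsHermitian, conjTranspose_mul, hPt, Matrix.mul_assoc,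
      Matrix.conjTranspose_eq_transpose_of_trivial]
  · have hy : Fᴴ *ᵥ x ≠ 0 := by
      intro h
      apply hx
      have hFH : IsUnit (Fᴴ).det := by
        rwa [Matrix.det_conjTranspose, isUnit_star]
      have := Matrix.eq_zero_of_mulVec_eq_zero (by simpa using hFH.ne_zero) h
      · exact this
    have key : star x ⬝ᵥ (F * P * Fᴴ) *ᵥ x
        = star (Fᴴ *ᵥ x) ⬝ᵥ P *ᵥ (Fᴴ *ᵥ x) := by
      rw [← Matrix.mulVec_mulVec, ← Matrix.mulVec_mulVec, Matrix.dotProduct_mulVec,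
        Matrix.star_mulVec, Matrix.conjTranspose_conjTranspose]
    rw [key]
    exact hP.dotProduct_mulVec_pos hy

/- STATEMENT 8 (Theorem 3, Time-Space Decomposition).
P ≻ 0, det F = 1, Q ⪰ 0, S ⪰ 0; prior P' = F P Fᵀ + Q, posterior P₊ = (P'⁻¹ + S)⁻¹.
Then log det P₊ − log det P = log det(I + Q (F P Fᵀ)⁻¹) − log det(I + P' S). -/
open Matrix in
theorem time_space_diversity_decomposition
    (n : ℕ) (P F Q S : Matrix (Fin n) (Fin n) ℝ)
    (hP : P.PosDef) (hF : F.det = 1) (hQ : Q.PosSemidef) (hS : S.PosSemidef)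
    (P' : Matrix (Fin n) (Fin n) ℝ) (hP' : P' = F * P * Fᵀ + Q)
    (Pplus : Matrix (Fin n) (Fin n) ℝ) (hPplus : Pplus = (P'⁻¹ + S)⁻¹) :
    Real.log Pplus.det - Real.log P.det =
      Real.log (1 + Q * (F * P * Fᵀ)⁻¹).det - Real.log (1 + P' * S).det := by
  have hFu : IsUnit F.det := by rw [hF]; exact isUnit_one
  have hFPFT : (F * P * Fᵀ).PosDef := fpf_posdef hP hFu
  have hP'pd : P'.PosDef := hP' ▸ hFPFT.add_posSemidef hQ
  have hsum : (P'⁻¹ + S).PosDef := hP'pd.inv.add_posSemidef hS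
  have hdFPF : (F * P * Fᵀ).det = P.det := by
    rw [Matrix.det_mul, Matrix.det_mul, hF, Matrix.det_transpose, hF]
    ring
  have ha : (0:ℝ) < P.det := hP.det_pos
  have hb : (0:ℝ) < P'.det := hP'pd.det_pos
  have hc : (0:ℝ) < (P'⁻¹ + S).det := hsum.det_pos
  have e1 : 1 + Q * (F * P * Fᵀ)⁻¹ = (F * P * Fᵀ + Q) * (F * P * Fᵀ)⁻¹ := by
    rw [add_mul, Matrix.mul_nonsing_inv _ (by rw [hdFPF]; exact ha.ne'.isUnit)]
  have e2 : 1 + P' * S = P' * (P'⁻¹ + S) := by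
    rw [mul_add, Matrix.mul_nonsing_inv _ hb.ne'.isUnit]
  have d1 : (1 + Q * (F * P * Fᵀ)⁻¹).det = P'.det * P.det⁻¹ := by
    rw [e1, Matrix.det_mul, Matrix.det_nonsing_inv, hdFPF, Ring.inverse_eq_inv', ← hP']
  have d2 : (1 + P' * S).det = P'.det * (P'⁻¹ + S).det := by
    rw [e2, Matrix.det_mul]
  have dplus : Pplus.det = ((P'⁻¹ + S).det)⁻¹ := by
    rw [hPplus, Matrix.det_nonsing_inv, Ring.inverse_eq_inv']
  rw [d1, d2, dplus, Real.log_inv, Real.log_mul hb.ne' (inv_ne_zero ha.ne'),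
    Real.log_mul hb.ne' hc.ne', Real.log_inv]
  ring
end

section
/- Consider the left-invariant error system on SE(3) with state space ℝ⁶ = so(3) ⊕ ℝ³ undergoing straight-line, constant-attitude motion: the one-step transition matrices are Φ(t+1,t) = [[I₃, 0],[−c_t a^∧, I₃]], where a ∈ ℝ³ is a fixed direction, c_t ∈ ℝ are scalars, and a^∧ is the skew-symmetric matrix of a. Let the only sensor be a GPS position measurement H = [0 I₃] with noise covariance R ≻ 0. Then for every horizon T ≥ 1, the rotational direction about the axis of translation, namely the vector (a, 0) ∈ ℝ⁶, lies in the kernel of the observability Gramian W_o(T); i.e., rotation about the axis of translation remains unobservable for all time. -/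
/- STATEMENT 14 (straight-line motion: rotation about the translation axis
unobservable). State space ℝ⁶ = so(3) ⊕ ℝ³. One-step transitions
Φ(t+1,t) = [[I₃, 0],[−c_t a^∧, I₃]], a ∈ ℝ³ fixed, c_t ∈ ℝ scalars, a^∧ the
skew-symmetric matrix of a (a^∧ x = a × x). GPS sensor H = [0 I₃], noise
covariance Rn ≻ 0. Then for every T ≥ 1 the vector (a, 0) ∈ ℝ⁶ lies in
ker W_o(T). -/
open Matrix Finset in
theorem straight_line_axis_rotation_unobservable
    (a : Fin 3 → ℝ) (hatA : Matrix (Fin 3) (Fin 3) ℝ)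
    (hHatA : ∀ x : Fin 3 → ℝ, hatA.mulVec x = crossProduct a x)
    (c : ℕ → ℝ)
    (Phi : ℕ → Matrix (Fin 3 ⊕ Fin 3) (Fin 3 ⊕ Fin 3) ℝ)
    (hPhi0 : Phi 0 = 1)
    (hPhiSucc : ∀ t, Phi (t + 1) =
      Matrix.fromBlocks 1 0 ((-(c t)) • hatA) 1 * Phi t)
    (H : Matrix (Fin 3) (Fin 3 ⊕ Fin 3) ℝ)
    (hH : H = Matrix.fromCols 0 1)
    (Rn : Matrix (Fin 3) (Fin 3) ℝ) (hRn : Rn.PosDef)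
    (W : ℕ → Matrix (Fin 3 ⊕ Fin 3) (Fin 3 ⊕ Fin 3) ℝ)
    (hW : ∀ T, W T = ∑ t ∈ Finset.range T, (Phi t)ᵀ * Hᵀ * Rn⁻¹ * H * Phi t) :
    ∀ T, 1 ≤ T → (W T).mulVec (Sum.elim a 0) = 0 := by
  have haa : hatA.mulVec a = 0 := by
    rw [hHatA]
    simpa using cross_self (![a 0, a 1, a 2] : Fin 3 → ℝ)
  have hPhiv : ∀ t, (Phi t).mulVec (Sum.elim a 0) = Sum.elim a 0 := by
    intro t
    induction t with
    | zero => simp [hPhi0]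
    | succ t ih =>
      rw [hPhiSucc, ← Matrix.mulVec_mulVec, ih]
      ext (i | i) <;>
        simp [Matrix.fromBlocks_mulVec, Matrix.neg_mulVec, Matrix.smul_mulVec, haa]
  have hHv : H.mulVec (Sum.elim a 0) = 0 := by
    rw [hH]
    ext i
    simp [Matrix.fromCols_mulVec_sumElim]
  intro T _
  have key : ∀ t, ((Phi t)ᵀ * Hᵀ * Rn⁻¹ * H * Phi t) *ᵥ (Sum.elim a 0) = 0 := by
    intro t
    have hz : (H * Phi t) *ᵥ (Sum.elim a 0) = 0 := by
      rw [← Matrix.mulVec_mulVec, hPhiv, hHv]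
    rw [show (Phi t)ᵀ * Hᵀ * Rn⁻¹ * H * Phi t =
        (Phi t)ᵀ * Hᵀ * Rn⁻¹ * (H * Phi t) by rw [Matrix.mul_assoc]]
    rw [← Matrix.mulVec_mulVec, hz]
    simp
  rw [hW]
  induction T with
  | zero => simp
  | succ n ih =>
    rw [Finset.sum_range_succ, Matrix.add_mulVec, key]
    rcases Nat.eq_zero_or_pos n with h | h
    · simp [h]
    · rw [ih h]; simp
end
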